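/- Let (R,m) be a Noetherian local ring and let g: F• → F'• be a morphism between bounded-above minimal complexes of finitely generated free R-modules (minimal meaning all differentials have entries in m). If g ⊗ id_{R/m} induces an isomorphism on cohomology in degrees ≤ q and a monomorphism in degree q+1, then g^i: F^i → F'^i is an isomorphism for i ≤ q, and g^{q+1} is a split injection. -/

import Mathlib

namespace MinimalAux
open CategoryTheory TensorProduct IsLocalRing

section Helpers
variable {R : Type} [CommRing R] [IsLocalRing R]

lemma tmul_eq_zero_of_mem_smul {M : Type*} [AddCommGroup M] [Module R M] {y : M}
    (hy : y ∈ (maximalIdeal R) • (⊤ : Submodule R M)) :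
    (1 : ResidueField R) ⊗ₜ[R] y = (0 : ResidueField R ⊗[R] M) := by
  refine Submodule.smul_induction_on hy ?_ ?_
  · intro a ha n _
    rw [tmul_smul, TensorProduct.smul_tmul']
    have h0 : a • (1 : ResidueField R) = 0 := by
      rw [Algebra.smul_def, mul_one, ResidueField.algebraMap_eq]
      exact (residue_eq_zero_iff _).mpr ha
    rw [h0, TensorProduct.zero_tmul]
  · intro x y hx hy
    rw [TensorProduct.tmul_add, hx, hy, add_zero]

lemma baseChange_eq_zero_of_range_le {M N : Type*} [AddCommGroup M] [Module R M]
    [AddCommGroup N] [Module R N] (f : M →ₗ[R] N)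
    (hf : LinearMap.range f ≤ (maximalIdeal R) • (⊤ : Submodule R N)) :
    LinearMap.baseChange (ResidueField R) f = 0 := by
  apply LinearMap.ext
  intro z
  induction z using TensorProduct.induction_on with
  | zero => simp
  | tmul c m =>
    rw [LinearMap.baseChange_tmul, LinearMap.zero_apply]
    have h1 : (1 : ResidueField R) ⊗ₜ[R] (f m) = 0 :=
      tmul_eq_zero_of_mem_smul (hf (LinearMap.mem_range_self f m))
    calc c ⊗ₜ[R] (f m) = c • ((1 : ResidueField R) ⊗ₜ[R] (f m)) := by
          rw [TensorProduct.smul_tmul', smul_eq_mul, mul_one]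
      _ = 0 := by rw [h1, smul_zero]
  | add x y hx hy => simp [map_add, hx, hy]

lemma surjective_of_baseChange_surjective {M N : Type*} [AddCommGroup M] [Module R M]
    [AddCommGroup N] [Module R N] [Module.Finite R N] (f : M →ₗ[R] N)
    (hf : Function.Surjective (LinearMap.baseChange (ResidueField R) f)) :
    Function.Surjective f := by
  rw [← LinearMap.range_eq_top, ← IsLocalRing.map_tensorProduct_mk_eq_top, eq_top_iff]
  rintro z -
  have key : ∀ ξ : ResidueField R ⊗[R] M, LinearMap.baseChange (ResidueField R) f ξ ∈
      (LinearMap.range f).map (TensorProduct.mk R (ResidueField R) N 1) := by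
    intro ξ
    induction ξ using TensorProduct.induction_on with
    | zero => simp
    | tmul c m =>
      obtain ⟨r, rfl⟩ := IsLocalRing.residue_surjective c
      rw [LinearMap.baseChange_tmul]
      have : (IsLocalRing.residue R r) ⊗ₜ[R] (f m)
          = r • ((1 : ResidueField R) ⊗ₜ[R] (f m)) := by
        rw [TensorProduct.smul_tmul', Algebra.smul_def, mul_one, ResidueField.algebraMap_eq]
      rw [this]
      exact Submodule.smul_mem _ r ⟨f m, LinearMap.mem_range_self f m, rfl⟩
    | add x y hx hy => rw [map_add]; exact Submodule.add_mem _ hx hy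
  induction z using TensorProduct.induction_on with
  | zero => exact Submodule.zero_mem _
  | tmul c n =>
    obtain ⟨r, rfl⟩ := IsLocalRing.residue_surjective c
    have : (IsLocalRing.residue R r) ⊗ₜ[R] n
        = r • ((1 : ResidueField R) ⊗ₜ[R] n) := by
      rw [TensorProduct.smul_tmul', Algebra.smul_def, mul_one, ResidueField.algebraMap_eq]
    rw [this]
    obtain ⟨ξ, hξ⟩ := hf ((1 : ResidueField R) ⊗ₜ[R] n)
    exact Submodule.smul_mem _ r (hξ ▸ key ξ)
  | add x y hx hy => exact Submodule.add_mem _ hx hy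

lemma split_of_baseChange_injective {M N : Type*} [AddCommGroup M] [Module R M]
    [AddCommGroup N] [Module R N] [Module.Finite R M] [Module.Finite R N] [Module.Free R N]
    (f : M →ₗ[R] N)
    (hf : Function.Injective (LinearMap.baseChange (ResidueField R) f)) :
    ∃ l : N →ₗ[R] M, l ∘ₗ f = LinearMap.id := by
  rw [IsLocalRing.split_injective_iff_lTensor_residueField_injective]
  rwa [← LinearMap.baseChange_eq_ltensor]

end Helpers


lemma homologyMap_eq_of_zero_d {S : Type} [CommRing S]
    {C D : CochainComplex (ModuleCat S) ℤ} (φ : C ⟶ D)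
    (hC : ∀ i j, C.d i j = 0) (hD : ∀ i j, D.d i j = 0) (i : ℤ) :
    ∃ (e₁ : C.homology i ≅ C.X i) (e₂ : D.X i ≅ D.homology i),
      HomologicalComplex.homologyMap φ i = e₁.hom ≫ φ.f i ≫ e₂.hom := by
  let ψ := (HomologicalComplex.shortComplexFunctor (ModuleCat S) (ComplexShape.up ℤ) i).map φ
  let γ := ShortComplex.LeftHomologyMapData.ofZeros ψ (hC _ _) (hC _ _) (hD _ _) (hD _ _)
  refine ⟨(ShortComplex.LeftHomologyData.ofZeros (C.sc i) (hC _ _) (hC _ _)).homologyIso,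
    (ShortComplex.LeftHomologyData.ofZeros (D.sc i) (hD _ _) (hD _ _)).homologyIso.symm, ?_⟩
  exact γ.homologyMap_eq

end MinimalAux



open CategoryTheory TensorProduct

/-- The determinantal ideal `I_k(M)` generated by all `k × k` minors of a matrix `M`
(with the convention `I_0 = R`). -/
def detIdeal {R : Type*} [CommRing R] {ι κ : Type*} (k : ℕ) (M : Matrix ι κ R) : Ideal R :=
  Ideal.span {x | ∃ (f : Fin k → ι) (g : Fin k → κ), x = ((M.submatrix f g).det)}

/-- The cohomology jump ideal `J^i_k(F•) = I_{rank(F^i)−k+1}(d^{i−1} ⊕ d^i)` computed from a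
complex `F•` of finitely generated free `R`-modules, where `d^{i−1} ⊕ d^i` is the block
diagonal matrix of the two differentials with respect to chosen bases. -/
noncomputable def jumpIdeal (R : Type*) [CommRing R]
    (F : CochainComplex (ModuleCat R) ℤ)
    [∀ j, Module.Finite R (F.X j)] [∀ j, Module.Free R (F.X j)]
    (i : ℤ) (k : ℕ) : Ideal R :=
  letI := Classical.decEq (Module.Free.ChooseBasisIndex R (F.X (i - 1)))
  letI := Classical.decEq (Module.Free.ChooseBasisIndex R (F.X i))
  detIdeal (Module.finrank R (F.X i) + 1 - k)
    (Matrix.fromBlocks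
      (LinearMap.toMatrix (Module.Free.chooseBasis R (F.X (i - 1)))
        (Module.Free.chooseBasis R (F.X i)) (F.d (i - 1) i).hom)
      0 0
      (LinearMap.toMatrix (Module.Free.chooseBasis R (F.X i))
        (Module.Free.chooseBasis R (F.X (i + 1))) (F.d i (i + 1)).hom))

/-- The base change `E• ⊗_R S` of a cochain complex of `R`-modules along `R → S`. -/
noncomputable def baseChangeComplex (R S : Type*) [CommRing R] [CommRing S] [Algebra R S]
    (E : CochainComplex (ModuleCat R) ℤ) : CochainComplex (ModuleCat S) ℤ where
  X i := ModuleCat.of S (S ⊗[R] E.X i)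
  d i j := ModuleCat.ofHom (LinearMap.baseChange S (E.d i j).hom)
  shape i j h := by
    have h0 : ((E.d i j).hom : E.X i →ₗ[R] E.X j) = 0 := by rw [E.shape i j h]; rfl
    show ModuleCat.ofHom (LinearMap.baseChange S (E.d i j).hom) = 0
    rw [h0, LinearMap.baseChange_zero]; rfl
  d_comp_d' i j k _ _ := by
    show ModuleCat.ofHom (LinearMap.baseChange S (E.d i j).hom) ≫
      ModuleCat.ofHom (LinearMap.baseChange S (E.d j k).hom) = 0
    rw [← ModuleCat.ofHom_comp, ← LinearMap.baseChange_comp]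
    have h0 : ((E.d j k).hom : E.X j →ₗ[R] E.X k).comp (E.d i j).hom = 0 := by
      rw [← ModuleCat.hom_comp, E.d_comp_d i j k]; rfl
    rw [h0, LinearMap.baseChange_zero]; rfl

/-- The base change of a morphism of cochain complexes along `R → S`. -/
noncomputable def baseChangeMap (R S : Type*) [CommRing R] [CommRing S] [Algebra R S]
    {F F' : CochainComplex (ModuleCat R) ℤ} (g : F ⟶ F') :
    baseChangeComplex R S F ⟶ baseChangeComplex R S F' where
  f i := ModuleCat.ofHom (LinearMap.baseChange S (g.f i).hom)
  comm' i j _ := by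
    show ModuleCat.ofHom (LinearMap.baseChange S (g.f i).hom) ≫
        ModuleCat.ofHom (LinearMap.baseChange S (F'.d i j).hom) =
      ModuleCat.ofHom (LinearMap.baseChange S (F.d i j).hom) ≫
        ModuleCat.ofHom (LinearMap.baseChange S (g.f j).hom)
    rw [← ModuleCat.ofHom_comp, ← ModuleCat.ofHom_comp, ← LinearMap.baseChange_comp,
      ← LinearMap.baseChange_comp, ← ModuleCat.hom_comp, ← ModuleCat.hom_comp, g.comm i j]

/-- Let `(R,m)` be a Noetherian local ring and `g : F• → F'•` a morphism between bounded-above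
minimal complexes of finitely generated free `R`-modules (minimal: the differentials have image
in `m · F^{j+1}`). If `g ⊗ id_{R/m}` induces an isomorphism on cohomology in degrees `≤ q` and a
monomorphism in degree `q+1`, then `g^i` is an isomorphism for `i ≤ q` and `g^{q+1}` is a split
injection. -/
theorem minimal_complex_morphism_iso_of_residue_equivalence
    {R : Type} [CommRing R] [IsNoetherianRing R] [IsLocalRing R]
    (F F' : CochainComplex (ModuleCat R) ℤ)
    [∀ j, Module.Finite R (F.X j)] [∀ j, Module.Free R (F.X j)]
    [∀ j, Module.Finite R (F'.X j)] [∀ j, Module.Free R (F'.X j)]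
    (hF : ∃ N : ℤ, ∀ j > N, Subsingleton (F.X j))
    (hF' : ∃ N : ℤ, ∀ j > N, Subsingleton (F'.X j))
    (hminF : ∀ j, LinearMap.range ((F.d j (j + 1)).hom : F.X j →ₗ[R] F.X (j + 1)) ≤
      (IsLocalRing.maximalIdeal R) • (⊤ : Submodule R (F.X (j + 1))))
    (hminF' : ∀ j, LinearMap.range ((F'.d j (j + 1)).hom : F'.X j →ₗ[R] F'.X (j + 1)) ≤
      (IsLocalRing.maximalIdeal R) • (⊤ : Submodule R (F'.X (j + 1))))
    (g : F ⟶ F') (q : ℤ)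
    (hiso : ∀ i ≤ q, CategoryTheory.IsIso (HomologicalComplex.homologyMap
      (baseChangeMap R (R ⧸ IsLocalRing.maximalIdeal R) g) i))
    (hmono : CategoryTheory.Mono (HomologicalComplex.homologyMap
      (baseChangeMap R (R ⧸ IsLocalRing.maximalIdeal R) g) (q + 1))) :
    (∀ i ≤ q, Function.Bijective (g.f i)) ∧
      Function.Injective (g.f (q + 1)) ∧
        ∃ N : Submodule R (F'.X (q + 1)),
          IsCompl (LinearMap.range ((g.f (q + 1)).hom : F.X (q + 1) →ₗ[R] F'.X (q + 1))) N := by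
  
  classical
  have hdC : ∀ i j, (baseChangeComplex R (R ⧸ IsLocalRing.maximalIdeal R) F).d i j = 0 := by
    intro i j
    by_cases h : i + 1 = j
    · subst h
      show ModuleCat.ofHom (LinearMap.baseChange (R ⧸ IsLocalRing.maximalIdeal R) (F.d i (i + 1)).hom) = 0
      apply ModuleCat.hom_ext
      exact MinimalAux.baseChange_eq_zero_of_range_le (F.d i (i + 1)).hom (hminF i)
    · exact (baseChangeComplex R _ F).shape i j h
  have hdD : ∀ i j, (baseChangeComplex R (R ⧸ IsLocalRing.maximalIdeal R) F').d i j = 0 := by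
    intro i j
    by_cases h : i + 1 = j
    · subst h
      show ModuleCat.ofHom (LinearMap.baseChange (R ⧸ IsLocalRing.maximalIdeal R) (F'.d i (i + 1)).hom) = 0
      apply ModuleCat.hom_ext
      exact MinimalAux.baseChange_eq_zero_of_range_le (F'.d i (i + 1)).hom (hminF' i)
    · exact (baseChangeComplex R _ F').shape i j h
  set φ := baseChangeMap R (R ⧸ IsLocalRing.maximalIdeal R) g with hφ
  have hbij : ∀ i ≤ q, Function.Bijective
      (LinearMap.baseChange (IsLocalRing.ResidueField R) (g.f i).hom) := by
    intro i hi
    obtain ⟨e₁, e₂, heq⟩ := MinimalAux.homologyMap_eq_of_zero_d φ hdC hdD i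
    haveI h1 := hiso i hi
    rw [heq] at h1
    haveI : IsIso (φ.f i) := by
      have : φ.f i = e₁.inv ≫ (e₁.hom ≫ φ.f i ≫ e₂.hom) ≫ e₂.inv := by simp
      rw [this]; infer_instance
    exact ⟨(ModuleCat.mono_iff_injective (φ.f i)).mp inferInstance,
      (ModuleCat.epi_iff_surjective (φ.f i)).mp inferInstance⟩
  have hinj : Function.Injective
      (LinearMap.baseChange (IsLocalRing.ResidueField R) (g.f (q + 1)).hom) := by
    obtain ⟨e₁, e₂, heq⟩ := MinimalAux.homologyMap_eq_of_zero_d φ hdC hdD (q + 1)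
    haveI h1 := hmono
    rw [heq] at h1
    haveI : Mono (φ.f (q + 1)) := by
      have : φ.f (q + 1) = e₁.inv ≫ (e₁.hom ≫ φ.f (q + 1) ≫ e₂.hom) ≫ e₂.inv := by simp
      rw [this]; infer_instance
    exact (ModuleCat.mono_iff_injective (φ.f (q + 1))).mp inferInstance
  obtain ⟨l, hl⟩ := MinimalAux.split_of_baseChange_injective
    (g.f (q + 1)).hom hinj
  have hlf : ∀ x, l ((g.f (q + 1)) x) = x := fun x => LinearMap.congr_fun hl x
  refine ⟨?_, ?_, LinearMap.ker l, ?_, ?_⟩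
  · intro i hi
    obtain ⟨hbi, hbs⟩ := hbij i hi
    refine ⟨?_, MinimalAux.surjective_of_baseChange_surjective _ hbs⟩
    obtain ⟨li, hli⟩ := MinimalAux.split_of_baseChange_injective
      (g.f i).hom hbi
    exact Function.LeftInverse.injective (g := li) (fun x => LinearMap.congr_fun hli x)
  · exact Function.LeftInverse.injective (g := l) hlf
  · rw [Submodule.disjoint_def]
    rintro x ⟨y, rfl⟩ hx
    rw [LinearMap.mem_ker] at hx
    rw [hlf y] at hx
    rw [hx, map_zero]
  · rw [codisjoint_iff, eq_top_iff]
    rintro x -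
    have : x = (g.f (q + 1)) (l x) + (x - (g.f (q + 1)) (l x)) := by abel
    rw [this]
    refine Submodule.add_mem_sup (LinearMap.mem_range_self _ _) ?_
    rw [LinearMap.mem_ker, map_sub, hlf (l x), sub_self]
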